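/- (Proposition 2) Let X be a finite set and let d be a linkage function on pairs of disjoint nonempty subsets of X that is symmetric (d(A,B) = d(B,A)), injective (d(C_1,C_2) = d(C_3,C_4) implies {C_1,C_2} = {C_3,C_4}), and reducible (for all pairwise disjoint nonempty C, C', C'' ⊆ X, if d(C,C') ≤ min{d(C,C''), d(C',C'')} then min{d(C,C''), d(C',C'')} ≤ d(C ∪ C', C'')). Let T be the hierarchical clustering produced by bottom-up hierarchical agglomerative clustering (HAC) with linkage d, which starts from singletons and repeatedly merges the pair of current clusters with minimum linkage until one cluster remains. Then there exists a sequence of thresholds τ_1 ≤ … ≤ τ_r such that the collection of all clusters appearing in the partitions output by the SCC algorithm run on X with linkage d and thresholds τ_1, …, τ_r equals the set of clusters of T. -/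

import Mathlib

open Finset
open scoped Classical

variable {α : Type*}

/-- One edge of the sub-cluster component graph (Definition 3). -/
def sccEdge (d : Finset α → Finset α → ℝ) (τ : ℝ)
    (S : Finset (Finset α)) (A B : Finset α) : Prop :=
  A ∈ S ∧ B ∈ S ∧ A ≠ B ∧ d A B ≤ τ ∧
    ((∀ C ∈ S, C ≠ A → d A B ≤ d A C) ∨ (∀ C ∈ S, C ≠ B → d B A ≤ d B C))

/-- The union of all clusters of `S` lying in the same sub-cluster component
as `A` at threshold `τ`. -/
noncomputable def sccComponent (d : Finset α → Finset α → ℝ) (τ : ℝ)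
    (S : Finset (Finset α)) (A : Finset α) : Finset α :=
  (S.filter fun B => Relation.ReflTransGen (sccEdge d τ S) A B).sup id

/-- One round of SCC at threshold `τ`. -/
noncomputable def sccRound (d : Finset α → Finset α → ℝ) (τ : ℝ)
    (S : Finset (Finset α)) : Finset (Finset α) :=
  S.image (sccComponent d τ S)

/-- The partitions produced by `n` successive rounds of SCC at threshold `τ`. -/
noncomputable def sccAtThreshold (d : Finset α → Finset α → ℝ) (τ : ℝ)
    (n : ℕ) (S : Finset (Finset α)) : List (Finset (Finset α)) :=
  (List.range n).map fun k => (sccRound d τ)^[k + 1] S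

/-- The partition of `X` into singletons. -/
noncomputable def singletonPartition (X : Finset α) : Finset (Finset α) :=
  X.image fun x => {x}

/-- The list of partitions produced by the rounds of the SCC algorithm. -/
noncomputable def sccPartitions (X : Finset α) (d : Finset α → Finset α → ℝ)
    (τs : List ℝ) : List (Finset (Finset α)) :=
  τs.foldl
    (fun acc τ =>
      acc ++ sccAtThreshold d τ X.card (acc.getLastD (singletonPartition X)))
    [singletonPartition X]

/-- One step of hierarchical agglomerative clustering: `S'` is obtained from
`S` by merging a pair of distinct clusters of `S` of minimum linkage. -/
def IsMinMerge (d : Finset α → Finset α → ℝ)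
    (S S' : Finset (Finset α)) : Prop :=
  ∃ A ∈ S, ∃ B ∈ S, A ≠ B ∧
    (∀ A' ∈ S, ∀ B' ∈ S, A' ≠ B' → d A B ≤ d A' B') ∧
    S' = insert (A ∪ B) ((S.erase A).erase B)

/-- `Ss` is the sequence of partitions produced by bottom-up HAC on `X` with
linkage `d`: it starts from the singletons, each partition is obtained from the
previous one by a minimum-linkage merge, and it ends with a single cluster. -/
def IsHACChain (d : Finset α → Finset α → ℝ) (X : Finset α)
    (Ss : List (Finset (Finset α))) : Prop :=
  Ss.head? = some (singletonPartition X) ∧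
  List.Chain' (IsMinMerge d) Ss ∧
  ∃ S, Ss.getLast? = some S ∧ S.card = 1

section SCCAux

variable {α : Type*}

/-- `S` is a collection of nonempty, pairwise disjoint subsets of `X`. -/
def GoodPart (X : Finset α) (S : Finset (Finset α)) : Prop :=
  (∀ C ∈ S, C ⊆ X ∧ C.Nonempty) ∧
  (∀ C ∈ S, ∀ C' ∈ S, C ≠ C' → Disjoint C C')

lemma goodPart_singletonPartition (X : Finset α) : GoodPart X (singletonPartition X) := by
  constructor
  · intro C hC
    simp only [singletonPartition, Finset.mem_image] at hC
    obtain ⟨x, hx, rfl⟩ := hC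
    exact ⟨Finset.singleton_subset_iff.mpr hx, Finset.singleton_nonempty x⟩
  · intro C hC C' hC' hne
    simp only [singletonPartition, Finset.mem_image] at hC hC'
    obtain ⟨x, -, rfl⟩ := hC
    obtain ⟨y, -, rfl⟩ := hC'
    simp only [Finset.disjoint_singleton] at *
    intro h; exact hne (by rw [h])

lemma goodPart_merge {X : Finset α} {S : Finset (Finset α)} {A B : Finset α}
    (hgood : GoodPart X S) (hA : A ∈ S) (hB : B ∈ S) (hAB : A ≠ B) :
    GoodPart X (insert (A ∪ B) ((S.erase A).erase B)) := by
  obtain ⟨h1, h2⟩ := hgood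
  have key : ∀ D ∈ (S.erase A).erase B, Disjoint (A ∪ B) D := by
    intro D hD
    have hDB : D ≠ B := (Finset.mem_erase.mp hD).1
    have hD' := Finset.mem_of_mem_erase hD
    have hDA : D ≠ A := (Finset.mem_erase.mp hD').1
    have hDS : D ∈ S := Finset.mem_of_mem_erase hD'
    exact Finset.disjoint_union_left.mpr
      ⟨h2 A hA D hDS (Ne.symm hDA), h2 B hB D hDS (Ne.symm hDB)⟩
  constructor
  · intro C hC
    rcases Finset.mem_insert.mp hC with rfl | hC
    · exact ⟨Finset.union_subset (h1 A hA).1 (h1 B hB).1,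
        ((h1 A hA).2).mono Finset.subset_union_left⟩
    · exact h1 C (Finset.mem_of_mem_erase (Finset.mem_of_mem_erase hC))
  · intro C hC C' hC' hne
    rcases Finset.mem_insert.mp hC with rfl | hC
    · rcases Finset.mem_insert.mp hC' with rfl | hC'
      · exact absurd rfl hne
      · exact key _ hC'
    · rcases Finset.mem_insert.mp hC' with rfl | hC'
      · exact (key _ hC).symm
      · exact h2 C (Finset.mem_of_mem_erase (Finset.mem_of_mem_erase hC))
          C' (Finset.mem_of_mem_erase (Finset.mem_of_mem_erase hC')) hne

/-- When all linkages exceed the threshold, an SCC round does nothing. -/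
lemma sccRound_id (d : Finset α → Finset α → ℝ) (τ : ℝ) (S : Finset (Finset α))
    (h : ∀ C ∈ S, ∀ C' ∈ S, C ≠ C' → τ < d C C') :
    sccRound d τ S = S := by
  have hcomp : ∀ C ∈ S, sccComponent d τ S C = C := by
    intro C hC
    have hRTG : ∀ D, Relation.ReflTransGen (sccEdge d τ S) C D → D = C := by
      intro D hr
      induction hr with
      | refl => rfl
      | tail hr' hedge ih =>
        exact absurd hedge.2.2.2.1
          (not_le.mpr (h _ hedge.1 _ hedge.2.1 hedge.2.2.1))
    have hfil : (S.filter fun D => Relation.ReflTransGen (sccEdge d τ S) C D) = {C} := by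
      ext D
      simp only [Finset.mem_filter, Finset.mem_singleton]
      constructor
      · rintro ⟨-, hr⟩; exact hRTG D hr
      · rintro rfl; exact ⟨hC, Relation.ReflTransGen.refl⟩
    rw [sccComponent, hfil, Finset.sup_singleton, id]
  calc sccRound d τ S = S.image id := Finset.image_congr (fun C hC => hcomp C hC)
    _ = S := Finset.image_id

/-- At threshold equal to the minimum linkage, an SCC round performs exactly
the minimum-linkage merge. -/
lemma sccRound_merge {X : Finset α} (d : Finset α → Finset α → ℝ)
    (hsym : ∀ A B : Finset α, d A B = d B A)
    (hinj : ∀ C₁ C₂ C₃ C₄ : Finset α,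
      C₁ ⊆ X → C₂ ⊆ X → C₃ ⊆ X → C₄ ⊆ X →
      C₁.Nonempty → C₂.Nonempty → C₃.Nonempty → C₄.Nonempty →
      Disjoint C₁ C₂ → Disjoint C₃ C₄ → d C₁ C₂ = d C₃ C₄ →
      (C₁ = C₃ ∧ C₂ = C₄) ∨ (C₁ = C₄ ∧ C₂ = C₃))
    {S : Finset (Finset α)} (hgood : GoodPart X S) {A B : Finset α}
    (hA : A ∈ S) (hB : B ∈ S) (hAB : A ≠ B)
    (hmin : ∀ A' ∈ S, ∀ B' ∈ S, A' ≠ B' → d A B ≤ d A' B') :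
    sccRound d (d A B) S = insert (A ∪ B) ((S.erase A).erase B) := by
  set τ := d A B with hτ
  have hedge_char : ∀ C D, sccEdge d τ S C D → (C = A ∧ D = B) ∨ (C = B ∧ D = A) := by
    rintro C D ⟨hC, hD, hne, hle, -⟩
    have heq : d C D = d A B := le_antisymm hle (hmin C hC D hD hne)
    exact hinj C D A B (hgood.1 C hC).1 (hgood.1 D hD).1 (hgood.1 A hA).1 (hgood.1 B hB).1
      (hgood.1 C hC).2 (hgood.1 D hD).2 (hgood.1 A hA).2 (hgood.1 B hB).2
      (hgood.2 C hC D hD hne) (hgood.2 A hA B hB hAB) heq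
  have hedgeAB : sccEdge d τ S A B :=
    ⟨hA, hB, hAB, le_refl _, Or.inl fun C hC hne => hmin A hA C hC (Ne.symm hne)⟩
  have hedgeBA : sccEdge d τ S B A :=
    ⟨hB, hA, hAB.symm, (hsym B A).le.trans (le_refl _),
      Or.inr fun C hC hne => hmin A hA C hC (Ne.symm hne)⟩
  have hRTG : ∀ C D, Relation.ReflTransGen (sccEdge d τ S) C D →
      D = C ∨ ((C = A ∨ C = B) ∧ (D = A ∨ D = B)) := by
    intro C D hr
    induction hr with
    | refl => exact Or.inl rfl
    | tail hr' hedge ih =>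
      rcases hedge_char _ _ hedge with ⟨hb, hD⟩ | ⟨hb, hD⟩ <;>
        rcases ih with h | ⟨hC', -⟩ <;> subst hb <;> subst hD
      · exact Or.inr ⟨Or.inl h.symm, Or.inr rfl⟩
      · exact Or.inr ⟨hC', Or.inr rfl⟩
      · exact Or.inr ⟨Or.inr h.symm, Or.inl rfl⟩
      · exact Or.inr ⟨hC', Or.inl rfl⟩
  have hcompAB : ∀ C, (C = A ∨ C = B) → sccComponent d τ S C = A ∪ B := by
    intro C hC
    have hfil : (S.filter fun D => Relation.ReflTransGen (sccEdge d τ S) C D) = {A, B} := by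
      ext D
      simp only [Finset.mem_filter, Finset.mem_insert, Finset.mem_singleton]
      constructor
      · rintro ⟨-, hr⟩
        rcases hRTG _ _ hr with rfl | ⟨-, h⟩
        · exact hC
        · exact h
      · rintro (rfl | rfl)
        · refine ⟨hA, ?_⟩
          rcases hC with rfl | rfl
          · exact Relation.ReflTransGen.refl
          · exact Relation.ReflTransGen.single hedgeBA
        · refine ⟨hB, ?_⟩
          rcases hC with rfl | rfl
          · exact Relation.ReflTransGen.single hedgeAB
          · exact Relation.ReflTransGen.refl
    rw [sccComponent, hfil]
    simp [Finset.sup_insert, Finset.sup_singleton, Finset.sup_eq_union]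
  have hcompC : ∀ C ∈ S, C ≠ A → C ≠ B → sccComponent d τ S C = C := by
    intro C hC hCA hCB
    have hfil : (S.filter fun D => Relation.ReflTransGen (sccEdge d τ S) C D) = {C} := by
      ext D
      simp only [Finset.mem_filter, Finset.mem_singleton]
      constructor
      · rintro ⟨-, hr⟩
        rcases hRTG _ _ hr with rfl | ⟨hC', -⟩
        · rfl
        · rcases hC' with rfl | rfl
          · exact absurd rfl hCA
          · exact absurd rfl hCB
      · rintro rfl; exact ⟨hC, Relation.ReflTransGen.refl⟩
    rw [sccComponent, hfil, Finset.sup_singleton, id]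
  ext P
  simp only [sccRound, Finset.mem_image, Finset.mem_insert, Finset.mem_erase]
  constructor
  · rintro ⟨C, hC, rfl⟩
    by_cases h : C = A ∨ C = B
    · exact Or.inl (hcompAB C h)
    · push_neg at h
      right
      rw [hcompC C hC h.1 h.2]
      exact ⟨h.2, h.1, hC⟩
  · rintro (rfl | ⟨hPB, hPA, hPS⟩)
    · exact ⟨A, hA, hcompAB A (Or.inl rfl)⟩
    · exact ⟨P, hPS, hcompC P hPS hPA hPB⟩

/-- After the minimum-linkage merge, all remaining linkages strictly exceed the
old minimum. -/
lemma merge_strict {X : Finset α} (d : Finset α → Finset α → ℝ)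
    (hsym : ∀ A B : Finset α, d A B = d B A)
    (hinj : ∀ C₁ C₂ C₃ C₄ : Finset α,
      C₁ ⊆ X → C₂ ⊆ X → C₃ ⊆ X → C₄ ⊆ X →
      C₁.Nonempty → C₂.Nonempty → C₃.Nonempty → C₄.Nonempty →
      Disjoint C₁ C₂ → Disjoint C₃ C₄ → d C₁ C₂ = d C₃ C₄ →
      (C₁ = C₃ ∧ C₂ = C₄) ∨ (C₁ = C₄ ∧ C₂ = C₃))
    (hred : ∀ C C' C'' : Finset α,
      C ⊆ X → C' ⊆ X → C'' ⊆ X →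
      C.Nonempty → C'.Nonempty → C''.Nonempty →
      Disjoint C C' → Disjoint C C'' → Disjoint C' C'' →
      d C C' ≤ min (d C C'') (d C' C'') →
      min (d C C'') (d C' C'') ≤ d (C ∪ C') C'')
    {S : Finset (Finset α)} (hgood : GoodPart X S) {A B : Finset α}
    (hA : A ∈ S) (hB : B ∈ S) (hAB : A ≠ B)
    (hmin : ∀ A' ∈ S, ∀ B' ∈ S, A' ≠ B' → d A B ≤ d A' B') :
    ∀ C ∈ insert (A ∪ B) ((S.erase A).erase B),
      ∀ C' ∈ insert (A ∪ B) ((S.erase A).erase B),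
        C ≠ C' → d A B < d C C' := by
  have hstrict : ∀ C ∈ S, ∀ C' ∈ S, C ≠ C' → ¬(C = A ∧ C' = B) → ¬(C = B ∧ C' = A) →
      d A B < d C C' := by
    intro C hC C' hC' hne h1 h2
    refine lt_of_le_of_ne (hmin C hC C' hC' hne) fun heq => ?_
    rcases hinj A B C C' (hgood.1 A hA).1 (hgood.1 B hB).1 (hgood.1 C hC).1 (hgood.1 C' hC').1
      (hgood.1 A hA).2 (hgood.1 B hB).2 (hgood.1 C hC).2 (hgood.1 C' hC').2
      (hgood.2 A hA B hB hAB) (hgood.2 C hC C' hC' hne) heq with ⟨e1, e2⟩ | ⟨e1, e2⟩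
    · exact h1 ⟨e1.symm, e2.symm⟩
    · exact h2 ⟨e2.symm, e1.symm⟩
  have hAB_union : ∀ D ∈ (S.erase A).erase B, d A B < d (A ∪ B) D := by
    intro D hD
    have hDB : D ≠ B := (Finset.mem_erase.mp hD).1
    have hDA : D ≠ A := (Finset.mem_erase.mp (Finset.mem_of_mem_erase hD)).1
    have hDS : D ∈ S := Finset.mem_of_mem_erase (Finset.mem_of_mem_erase hD)
    have h1 : d A B < d A D :=
      hstrict A hA D hDS (Ne.symm hDA) (fun h => hDB h.2) (fun h => hAB h.1)
    have h2 : d A B < d B D :=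
      hstrict B hB D hDS (Ne.symm hDB) (fun h => hAB h.1.symm) (fun h => hDA h.2)
    have hle := hred A B D (hgood.1 A hA).1 (hgood.1 B hB).1 (hgood.1 D hDS).1
      (hgood.1 A hA).2 (hgood.1 B hB).2 (hgood.1 D hDS).2
      (hgood.2 A hA B hB hAB) (hgood.2 A hA D hDS (Ne.symm hDA))
      (hgood.2 B hB D hDS (Ne.symm hDB)) (le_min h1.le h2.le)
    exact lt_of_lt_of_le (lt_min h1 h2) hle
  intro C hC C' hC' hne
  rcases Finset.mem_insert.mp hC with rfl | hC
  · rcases Finset.mem_insert.mp hC' with rfl | hC'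
    · exact absurd rfl hne
    · exact hAB_union C' hC'
  · rcases Finset.mem_insert.mp hC' with rfl | hC'
    · rw [hsym C (A ∪ B)]; exact hAB_union C hC
    · exact hstrict C (Finset.mem_of_mem_erase (Finset.mem_of_mem_erase hC))
        C' (Finset.mem_of_mem_erase (Finset.mem_of_mem_erase hC')) hne
        (fun h => (Finset.mem_erase.mp (Finset.mem_of_mem_erase hC)).1 h.1)
        (fun h => (Finset.mem_erase.mp hC).1 h.1)

lemma sccAtThreshold_all_eq (d : Finset α → Finset α → ℝ) (τ : ℝ)
    {S S' : Finset (Finset α)} (h1 : sccRound d τ S = S')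
    (h2 : sccRound d τ S' = S') (n : ℕ) :
    ∀ P ∈ sccAtThreshold d τ n S, P = S' := by
  have key : ∀ k, (sccRound d τ)^[k + 1] S = S' := by
    intro k
    induction k with
    | zero => simpa using h1
    | succ k ih => rw [Function.iterate_succ_apply', ih, h2]
  intro P hP
  simp only [sccAtThreshold, List.mem_map, List.mem_range] at hP
  obtain ⟨k, -, rfl⟩ := hP
  exact key k

lemma sccAtThreshold_ne_nil (d : Finset α → Finset α → ℝ) (τ : ℝ)
    {n : ℕ} (hn : 0 < n) (S : Finset (Finset α)) :
    sccAtThreshold d τ n S ≠ [] := by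
  simp only [sccAtThreshold, ne_eq, List.map_eq_nil_iff, List.range_eq_nil]
  omega

/-- The key induction along the HAC chain. -/
lemma chain_key (X : Finset α) (hX : X.Nonempty) (d : Finset α → Finset α → ℝ)
    (hsym : ∀ A B : Finset α, d A B = d B A)
    (hinj : ∀ C₁ C₂ C₃ C₄ : Finset α,
      C₁ ⊆ X → C₂ ⊆ X → C₃ ⊆ X → C₄ ⊆ X →
      C₁.Nonempty → C₂.Nonempty → C₃.Nonempty → C₄.Nonempty →
      Disjoint C₁ C₂ → Disjoint C₃ C₄ → d C₁ C₂ = d C₃ C₄ →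
      (C₁ = C₃ ∧ C₂ = C₄) ∨ (C₁ = C₄ ∧ C₂ = C₃))
    (hred : ∀ C C' C'' : Finset α,
      C ⊆ X → C' ⊆ X → C'' ⊆ X →
      C.Nonempty → C'.Nonempty → C''.Nonempty →
      Disjoint C C' → Disjoint C C'' → Disjoint C' C'' →
      d C C' ≤ min (d C C'') (d C' C'') →
      min (d C C'') (d C' C'') ≤ d (C ∪ C') C'') :
    ∀ (tail : List (Finset (Finset α))) (S : Finset (Finset α)) (b : ℝ),
      GoodPart X S → (∀ C ∈ S, ∀ C' ∈ S, C ≠ C' → b < d C C') →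
      List.Chain (IsMinMerge d) S tail →
      ∃ τs : List ℝ, τs.Pairwise (· ≤ ·) ∧ (∀ τ ∈ τs, b < τ) ∧
        ∀ acc : List (Finset (Finset α)), acc.getLast? = some S →
          ∀ P, P ∈ List.foldl
              (fun acc τ =>
                acc ++ sccAtThreshold d τ X.card (acc.getLastD (singletonPartition X)))
              acc τs ↔ P ∈ acc ∨ P ∈ tail := by
  intro tail
  induction tail with
  | nil =>
    intro S b _ _ _
    exact ⟨[], List.Pairwise.nil, by simp, fun acc _ P => by simp⟩
  | cons T rest ih =>
    intro S b hgood hb hchain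
    rw [List.Chain, List.chain_cons] at hchain
    obtain ⟨⟨A, hA, B, hB, hAB, hmin, rfl⟩, hchain⟩ := hchain
    set v := d A B with hv
    set M : Finset (Finset α) := insert (A ∪ B) ((S.erase A).erase B) with hM
    have hbv : b < v := hb A hA B hB hAB
    have hgood' : GoodPart X M := goodPart_merge hgood hA hB hAB
    have hstrict : ∀ C ∈ M, ∀ C' ∈ M, C ≠ C' → v < d C C' :=
      merge_strict d hsym hinj hred hgood hA hB hAB hmin
    have hround1 : sccRound d v S = M := sccRound_merge d hsym hinj hgood hA hB hAB hmin
    have hround2 : sccRound d v M = M := sccRound_id d v M hstrict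
    obtain ⟨τs', hsorted', hgt', hfold'⟩ := ih M v hgood' hstrict hchain
    refine ⟨v :: τs', ?_, ?_, ?_⟩
    · exact List.pairwise_cons.mpr ⟨fun τ hτ => (hgt' τ hτ).le, hsorted'⟩
    · intro τ hτ
      rcases List.mem_cons.mp hτ with rfl | hτ
      · exact hbv
      · exact hbv.trans (hgt' τ hτ)
    · intro acc hlast P
      have hanil : acc ≠ [] := by
        intro h; rw [h] at hlast; simp at hlast
      have hn : 0 < X.card := Finset.card_pos.mpr hX
      have hgetD : acc.getLastD (singletonPartition X) = S := by
        rw [List.getLastD_eq_getLast?, hlast, Option.getD_some]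
      set chunk := sccAtThreshold d v X.card S with hchunk
      have hall : ∀ P ∈ chunk, P = M := sccAtThreshold_all_eq d v hround1 hround2 X.card
      have hcne : chunk ≠ [] := sccAtThreshold_ne_nil d v hn S
      have hMmem : M ∈ chunk := by
        obtain ⟨c, cs, hcs⟩ := List.exists_cons_of_ne_nil hcne
        have : c ∈ chunk := by rw [hcs]; exact List.mem_cons_self (a := c) (l := cs)
        rw [← hall c this]; exact this
      have hstep : List.foldl
          (fun acc τ =>
            acc ++ sccAtThreshold d τ X.card (acc.getLastD (singletonPartition X)))
          acc (v :: τs') = List.foldl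
          (fun acc τ =>
            acc ++ sccAtThreshold d τ X.card (acc.getLastD (singletonPartition X)))
          (acc ++ chunk) τs' := by
        rw [List.foldl_cons, hgetD]
      have hlast' : (acc ++ chunk).getLast? = some M := by
        rw [List.getLast?_append]
        have : chunk.getLast? = some M := by
          obtain ⟨x, hx⟩ := Option.ne_none_iff_exists'.mp
            (fun h => hcne (List.getLast?_eq_none_iff.mp h))
          rw [hx, hall x (List.mem_of_getLast? hx)]
        rw [this, Option.or]
      rw [hstep, hfold' (acc ++ chunk) hlast' P, List.mem_append, List.mem_cons]
      constructor
      · rintro ((h | h) | h)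
        · exact Or.inl h
        · exact Or.inr (Or.inl (hall P h))
        · exact Or.inr (Or.inr h)
      · rintro (h | rfl | h)
        · exact Or.inl (Or.inl h)
        · exact Or.inl (Or.inr hMmem)
        · exact Or.inr h

end SCCAux

/-- **Proposition 2.** For a symmetric, injective, reducible
linkage `d`, there is a sequence of increasing thresholds for which the set of
clusters produced by SCC equals the set of clusters of the HAC tree. -/
theorem scc_generalizes_hac (X : Finset α) (hX : X.Nonempty)
    (d : Finset α → Finset α → ℝ)
    -- symmetry
    (hsym : ∀ A B : Finset α, d A B = d B A)
    -- injectivity on pairs of disjoint nonempty subsets of `X`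
    (hinj : ∀ C₁ C₂ C₃ C₄ : Finset α,
      C₁ ⊆ X → C₂ ⊆ X → C₃ ⊆ X → C₄ ⊆ X →
      C₁.Nonempty → C₂.Nonempty → C₃.Nonempty → C₄.Nonempty →
      Disjoint C₁ C₂ → Disjoint C₃ C₄ → d C₁ C₂ = d C₃ C₄ →
      (C₁ = C₃ ∧ C₂ = C₄) ∨ (C₁ = C₄ ∧ C₂ = C₃))
    -- reducibility
    (hred : ∀ C C' C'' : Finset α,
      C ⊆ X → C' ⊆ X → C'' ⊆ X →
      C.Nonempty → C'.Nonempty → C''.Nonempty →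
      Disjoint C C' → Disjoint C C'' → Disjoint C' C'' →
      d C C' ≤ min (d C C'') (d C' C'') →
      min (d C C'') (d C' C'') ≤ d (C ∪ C') C'')
    -- `Ss` is the sequence of partitions produced by HAC; its clusters form the HAC tree
    (Ss : List (Finset (Finset α))) (hSs : IsHACChain d X Ss) :
    ∃ τs : List ℝ, τs.Pairwise (· ≤ ·) ∧
      {C | ∃ P ∈ sccPartitions X d τs, C ∈ P} =
        {C | ∃ S ∈ Ss, C ∈ S} := by
  obtain ⟨hhead, hchain', -⟩ := hSs
  cases Ss with
  | nil => simp at hhead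
  | cons S₀ tail =>
    have hS₀ : S₀ = singletonPartition X := by simpa using hhead
    subst hS₀
    have hchain : List.Chain (IsMinMerge d) (singletonPartition X) tail := hchain'
    cases tail with
    | nil =>
      refine ⟨[], List.Pairwise.nil, ?_⟩
      ext C
      simp [sccPartitions]
    | cons T rest =>
      rw [List.Chain, List.chain_cons] at hchain
      obtain ⟨hmm, hchainT⟩ := hchain
      obtain ⟨A, hA, B, hB, hAB, hmin, hT⟩ := hmm
      have hb : ∀ C ∈ singletonPartition X, ∀ C' ∈ singletonPartition X,
          C ≠ C' → d A B - 1 < d C C' :=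
        fun C hC C' hC' hne => lt_of_lt_of_le (sub_one_lt _) (hmin C hC C' hC' hne)
      have hchain2 : List.Chain (IsMinMerge d) (singletonPartition X) (T :: rest) := by
        rw [List.Chain, List.chain_cons]
        exact ⟨⟨A, hA, B, hB, hAB, hmin, hT⟩, hchainT⟩
      obtain ⟨τs, hsorted, -, hfold⟩ := chain_key X hX d hsym hinj hred (T :: rest)
        (singletonPartition X) (d A B - 1) (goodPart_singletonPartition X) hb hchain2
      refine ⟨τs, hsorted, ?_⟩
      have hfold' := hfold [singletonPartition X] (by simp)
      have hmem : ∀ P, P ∈ sccPartitions X d τs ↔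
          P ∈ (singletonPartition X :: T :: rest) := by
        intro P
        unfold sccPartitions
        rw [hfold' P]
        simp [List.mem_cons]
      ext C
      simp only [Set.mem_setOf_eq]
      exact ⟨fun ⟨P, h, hc⟩ => ⟨P, (hmem P).mp h, hc⟩,
        fun ⟨P, h, hc⟩ => ⟨P, (hmem P).mpr h, hc⟩⟩
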